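/- Let 1 < p < ∞ and f = 𝐏_1 be the Poisson kernel 𝐏_1(x) = π^{-1}(1+x²)^{-1} on ℝ, and 𝐏_t(x) = π^{-1} t (x²+t²)^{-1}. Then ‖f‖_{L_p(ℝ)} ≈ 1 and ‖t ∂_t 𝐏_t * f‖_{L_p(ℝ)} ≈ t (t+1)^{−1−1/p'}, uniformly in t > 0, where 𝐏_t * f = 𝐏_{t+1}. Consequently, for any q ∈ (1,∞), (∫_0^∞ ‖t ∂_t 𝐏_t * f‖_{L_p(ℝ)}^q dt/t)^{1/q} ≈ (p')^{1/q}, with constants independent of p and q. -/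

import Mathlib

open MeasureTheory Set

/-- The Poisson kernel `𝐏_t(x) = π⁻¹ t/(x²+t²)` on `ℝ`. -/
noncomputable def pK (t x : ℝ) : ℝ := t / (Real.pi * (x ^ 2 + t ^ 2))

/-- `t ∂_t (𝐏_t * 𝐏_1)(x)`, using `𝐏_t * 𝐏_1 = 𝐏_{t+1}`. -/
noncomputable def pg (t x : ℝ) : ℝ := t * deriv (fun u : ℝ => pK (u + 1) x) t

/-- The `L_p(ℝ)` norm `(∫ |h|^p)^{1/p}`. -/
noncomputable def lpN (p : ℝ) (h : ℝ → ℝ) : ℝ := (∫ x : ℝ, |h x| ^ p) ^ (1 / p)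

/-- The conjugate index `p' = p/(p-1)`. -/
noncomputable def pconj (p : ℝ) : ℝ := p / (p - 1)

open Real



/-- Generic upper bound: if `0 ≤ b ≤ (1+x²)⁻¹`, then `b^p` is integrable with integral `≤ π`. -/
lemma aux_int (b : ℝ → ℝ) (hb : Measurable b) (h0 : ∀ x, 0 ≤ b x)
    (h1 : ∀ x, b x ≤ (1 + x ^ 2)⁻¹) {p : ℝ} (hp : 1 ≤ p) :
    Integrable (fun x => b x ^ p) ∧ (∫ x : ℝ, b x ^ p) ≤ π := by
  have hdom : ∀ x, b x ^ p ≤ (1 + x ^ 2)⁻¹ := by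
    intro x
    rcases eq_or_lt_of_le (h0 x) with h | h
    · rw [← h, Real.zero_rpow (by linarith)]
      positivity
    · calc b x ^ p ≤ b x ^ (1 : ℝ) := by
            apply Real.rpow_le_rpow_of_exponent_ge h _ hp
            exact (h1 x).trans (by
              have : (1:ℝ) ≤ 1 + x ^ 2 := by nlinarith [sq_nonneg x]
              exact inv_le_one_of_one_le₀ this)
        _ = b x := Real.rpow_one _
        _ ≤ _ := h1 x
  have hnn : ∀ x, 0 ≤ b x ^ p := fun x => Real.rpow_nonneg (h0 x) p
  have hmeas : Measurable fun x => b x ^ p := hb.pow measurable_const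
  have hint : Integrable (fun x => b x ^ p) := by
    apply Integrable.mono integrable_inv_one_add_sq hmeas.aestronglyMeasurable
    filter_upwards with x
    rw [Real.norm_eq_abs, Real.norm_eq_abs, abs_of_nonneg (hnn x),
      abs_of_nonneg (by positivity : (0:ℝ) ≤ (1 + x ^ 2)⁻¹)]
    exact hdom x
  refine ⟨hint, ?_⟩
  calc (∫ x : ℝ, b x ^ p) ≤ ∫ x : ℝ, (1 + x ^ 2)⁻¹ :=
        integral_mono hint integrable_inv_one_add_sq hdom
    _ = π := integral_univ_inv_one_add_sq

/-- Generic lower bound via values on `Icc a₀ a₁`. -/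
lemma aux_low (b : ℝ → ℝ) (h0 : ∀ x, 0 ≤ b x) {p : ℝ} (hint : Integrable (fun x => b x ^ p))
    {m a₀ a₁ : ℝ} (ha : a₀ < a₁) (hm : ∀ x ∈ Icc a₀ a₁, m ≤ b x ^ p) :
    m * (a₁ - a₀) ≤ ∫ x : ℝ, b x ^ p := by
  have hnn : ∀ x, 0 ≤ b x ^ p := fun x => Real.rpow_nonneg (h0 x) p
  have h2 : (∫ x in Icc a₀ a₁, b x ^ p) ≤ ∫ x : ℝ, b x ^ p :=
    setIntegral_le_integral hint (Filter.Eventually.of_forall hnn)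
  refine le_trans ?_ h2
  have := setIntegral_ge_of_const_le (μ := volume) (s := Icc a₀ a₁) (f := fun x => b x ^ p)
    measurableSet_Icc (by simp) hm hint.integrableOn
  calc m * (a₁ - a₀) = m * (volume (Icc a₀ a₁)).toReal := by
        rw [Real.volume_Icc, ENNReal.toReal_ofReal (by linarith)]
    _ ≤ _ := by rw [smul_eq_mul, mul_comm] at this; exact this



lemma rpow_rpow_inv' {a p : ℝ} (ha : 0 ≤ a) (hp : 0 < p) : (a ^ p) ^ (1 / p) = a := by
  rw [← Real.rpow_mul ha, mul_one_div, div_self hp.ne', Real.rpow_one]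

lemma lpN_pK1 {p : ℝ} (hp : 1 < p) :
    1 / (2 * π) ≤ lpN p (pK 1) ∧ lpN p (pK 1) ≤ π := by
  have hπ := Real.pi_gt_three
  set b : ℝ → ℝ := fun x => |pK 1 x| with hb
  have hbeq : ∀ x, b x = (π * (x ^ 2 + 1))⁻¹ := by
    intro x
    have h1 : (0:ℝ) < π * (x ^ 2 + 1) := by positivity
    simp only [hb, pK, one_pow, one_div]
    rw [abs_of_nonneg (by positivity)]
  have h0 : ∀ x, 0 ≤ b x := fun x => abs_nonneg _
  have h1 : ∀ x, b x ≤ (1 + x ^ 2)⁻¹ := by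
    intro x
    rw [hbeq x]
    apply inv_anti₀ (by positivity)
    nlinarith [sq_nonneg x]
  have hbm : Measurable b := by
    apply Measurable.abs
    apply Measurable.div measurable_const
    fun_prop
  obtain ⟨hint, hle⟩ := aux_int b hbm h0 h1 hp.le
  have hnn : (0:ℝ) ≤ ∫ x : ℝ, b x ^ p :=
    integral_nonneg fun x => Real.rpow_nonneg (h0 x) p
  have hp0 : (0:ℝ) < p := by linarith
  constructor
  · -- lower bound
    have hlow : ((2 * π)⁻¹ : ℝ) ^ p * (1 - (-1)) ≤ ∫ x : ℝ, b x ^ p := by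
      apply aux_low b h0 hint (by norm_num)
      intro x hx
      apply Real.rpow_le_rpow (by positivity) _ hp0.le
      rw [hbeq x]
      apply inv_anti₀ (by positivity)
      nlinarith [hx.1, hx.2, Real.pi_pos, mul_nonneg (sub_nonneg.2 hx.1) (sub_nonneg.2 hx.2)]
    have : ((2 * π)⁻¹ : ℝ) ^ p ≤ ∫ x : ℝ, b x ^ p := by nlinarith [Real.rpow_nonneg (by positivity : (0:ℝ) ≤ (2*π)⁻¹) p]
    calc 1 / (2 * π) = ((2 * π)⁻¹ ^ p) ^ (1/p) := by
          rw [rpow_rpow_inv' (by positivity) hp0, one_div]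
      _ ≤ (∫ x : ℝ, b x ^ p) ^ (1/p) :=
          Real.rpow_le_rpow (by positivity) this (by positivity)
  · calc lpN p (pK 1) = (∫ x : ℝ, b x ^ p) ^ (1/p) := rfl
      _ ≤ π ^ (1/p) := Real.rpow_le_rpow hnn hle (by positivity)
      _ ≤ π ^ (1:ℝ) := Real.rpow_le_rpow_of_exponent_le (by linarith)
          (by rw [div_le_one hp0]; linarith)
      _ = π := Real.rpow_one _

/-- The universal profile integral `A p = ∫ (|y²-1|/(1+y²)²)^p`. -/
noncomputable def Ap (p : ℝ) : ℝ := ∫ y : ℝ, (|y ^ 2 - 1| / (1 + y ^ 2) ^ 2) ^ p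

lemma Ap_props {p : ℝ} (hp : 1 < p) :
    Integrable (fun y : ℝ => (|y ^ 2 - 1| / (1 + y ^ 2) ^ 2) ^ p) ∧
    (4:ℝ)⁻¹ ^ p ≤ Ap p ∧ Ap p ≤ π := by
  have hp0 : (0:ℝ) < p := by linarith
  set b : ℝ → ℝ := fun y => |y ^ 2 - 1| / (1 + y ^ 2) ^ 2 with hb
  have h0 : ∀ x, 0 ≤ b x := by intro x; positivity
  have h1 : ∀ x, b x ≤ (1 + x ^ 2)⁻¹ := by
    intro x
    rw [hb]
    rw [div_le_iff₀ (by positivity)]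
    have : |x ^ 2 - 1| ≤ 1 + x ^ 2 := by
      rw [abs_le]; constructor <;> nlinarith [sq_nonneg x]
    calc |x ^ 2 - 1| ≤ 1 + x ^ 2 := this
      _ = (1 + x ^ 2)⁻¹ * (1 + x ^ 2) ^ 2 := by field_simp
  have hbm : Measurable b := by fun_prop
  obtain ⟨hint, hle⟩ := aux_int b hbm h0 h1 hp.le
  refine ⟨hint, ?_, hle⟩
  have hlow : ((4:ℝ)⁻¹) ^ p * ((1:ℝ)/2 - (-(1:ℝ)/2)) ≤ ∫ x : ℝ, b x ^ p := by
    apply aux_low b h0 hint (by norm_num)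
    intro x hx
    apply Real.rpow_le_rpow (by norm_num) _ hp0.le
    rw [hb]
    rw [le_div_iff₀ (by positivity)]
    have hx2 : x ^ 2 ≤ 1/4 := by nlinarith [hx.1, hx.2]
    have : 3/4 ≤ |x ^ 2 - 1| := by
      rw [abs_sub_comm, abs_of_nonneg (by nlinarith)]; nlinarith
    nlinarith [sq_nonneg x]
  have h4 : (0:ℝ) ≤ (4:ℝ)⁻¹ ^ p := by positivity
  calc ((4:ℝ)⁻¹) ^ p = ((4:ℝ)⁻¹) ^ p * 1 := by ring
    _ ≤ ∫ x : ℝ, b x ^ p := by convert hlow using 2; norm_num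
    _ = Ap p := rfl

lemma pg_eq (t x : ℝ) (ht : 0 < t) :
    pg t x = t * ((x ^ 2 - (t + 1) ^ 2) / (π * (x ^ 2 + (t + 1) ^ 2) ^ 2)) := by
  have hs : (0:ℝ) < t + 1 := by linarith
  have hx : (0:ℝ) < x ^ 2 + (t + 1) ^ 2 := by nlinarith [sq_nonneg x, sq_nonneg (t+1)]
  have hD : (0:ℝ) < π * (x ^ 2 + (t + 1) ^ 2) := mul_pos Real.pi_pos hx
  have h1 : HasDerivAt (fun u : ℝ => u + 1) 1 t := (hasDerivAt_id t).add_const 1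
  have h2 : HasDerivAt (fun u : ℝ => π * (x ^ 2 + (u + 1) ^ 2))
      (π * ((2:ℕ) * (t + 1) ^ (2 - 1) * 1)) t :=
    (((h1.pow 2).const_add (x ^ 2)).const_mul π)
  have h3 : HasDerivAt (fun u : ℝ => pK (u + 1) x)
      ((1 * (π * (x ^ 2 + (t + 1) ^ 2)) - (t + 1) * (π * ((2:ℕ) * (t + 1) ^ (2 - 1) * 1))) /
        (π * (x ^ 2 + (t + 1) ^ 2)) ^ 2) t := by
    simpa [pK, Pi.div_def] using h1.div h2 hD.ne'
  rw [pg, h3.deriv]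
  have hπ := Real.pi_pos
  field_simp
  ring

lemma habs2 (t x : ℝ) (ht : 0 < t) :
    |pg t x| = t / (π * (t + 1) ^ 2) * (|(x / (t + 1)) ^ 2 - 1| / (1 + (x / (t + 1)) ^ 2) ^ 2) := by
  have hs : (0:ℝ) < t + 1 := by linarith
  have hπ := Real.pi_pos
  have hx : (0:ℝ) < x ^ 2 + (t + 1) ^ 2 := by nlinarith [sq_nonneg x, sq_nonneg (t+1)]
  have habs : |pg t x| = t * |x ^ 2 - (t + 1) ^ 2| / (π * (x ^ 2 + (t + 1) ^ 2) ^ 2) := by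
    rw [pg_eq t x ht, abs_mul, abs_of_pos ht, abs_div,
      abs_of_pos (by positivity : (0:ℝ) < π * (x ^ 2 + (t + 1) ^ 2) ^ 2), mul_div_assoc]
  have e1 : (x / (t + 1)) ^ 2 - 1 = (x ^ 2 - (t + 1) ^ 2) / (t + 1) ^ 2 := by field_simp
  rw [habs, e1, abs_div, abs_of_pos (by positivity : (0:ℝ) < (t + 1) ^ 2)]
  have hx2 : (0:ℝ) < 1 + (x / (t + 1)) ^ 2 := by positivity
  rw [div_pow]
  field_simp
  ring
lemma int_pg {p t : ℝ} (hp : 1 < p) (ht : 0 < t) :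
    ∫ x : ℝ, |pg t x| ^ p = (t / (π * (t + 1) ^ 2)) ^ p * ((t + 1) * Ap p) := by
  have hs : (0:ℝ) < t + 1 := by linarith
  have hπ := Real.pi_pos
  have hc : (0:ℝ) ≤ t / (π * (t + 1) ^ 2) := by positivity
  have key : ∀ x : ℝ, |pg t x| ^ p =
      (t / (π * (t + 1) ^ 2)) ^ p *
        (fun y : ℝ => (|y ^ 2 - 1| / (1 + y ^ 2) ^ 2) ^ p) (x / (t + 1)) := by
    intro x
    rw [habs2 t x ht, Real.mul_rpow hc (by positivity)]
  calc ∫ x : ℝ, |pg t x| ^ p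
      = ∫ x : ℝ, (t / (π * (t + 1) ^ 2)) ^ p *
          (fun y : ℝ => (|y ^ 2 - 1| / (1 + y ^ 2) ^ 2) ^ p) (x / (t + 1)) := by
        simp_rw [key]
    _ = (t / (π * (t + 1) ^ 2)) ^ p *
          ∫ x : ℝ, (fun y : ℝ => (|y ^ 2 - 1| / (1 + y ^ 2) ^ 2) ^ p) (x / (t + 1)) :=
        integral_const_mul _ _
    _ = (t / (π * (t + 1) ^ 2)) ^ p * ((t + 1) * Ap p) := by
        rw [MeasureTheory.Measure.integral_comp_div
          (fun y : ℝ => (|y ^ 2 - 1| / (1 + y ^ 2) ^ 2) ^ p) (t + 1)]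
        rw [abs_of_pos hs, smul_eq_mul, Ap]

lemma lpN_pg {p t : ℝ} (hp : 1 < p) (ht : 0 < t) :
    lpN p (pg t) = (Ap p) ^ (1/p) / π * (t * (t + 1) ^ (1/p - 2)) := by
  have hs : (0:ℝ) < t + 1 := by linarith
  have hπ := Real.pi_pos
  have hp0 : (0:ℝ) < p := by linarith
  have hA : (0:ℝ) ≤ Ap p := le_trans (by positivity) (Ap_props hp).2.1
  have hc : (0:ℝ) ≤ t / (π * (t + 1) ^ 2) := by positivity
  rw [lpN, int_pg hp ht, Real.mul_rpow (by positivity) (by positivity),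
    rpow_rpow_inv' hc hp0, Real.mul_rpow hs.le hA]
  have e2 : (t + 1) ^ (1/p - 2) = (t + 1) ^ (1/p) / (t + 1) ^ (2:ℕ) := by
    rw [Real.rpow_sub hs, ← Real.rpow_natCast (t+1) 2]; norm_num
  rw [e2]
  have h1 : (0:ℝ) < (t + 1) ^ (1/p) := Real.rpow_pos_of_pos hs _
  field_simp

lemma Kp_bounds {p : ℝ} (hp : 1 < p) :
    1 / (4 * π) ≤ (Ap p) ^ (1/p) / π ∧ (Ap p) ^ (1/p) / π ≤ 1 := by
  have hπ := Real.pi_pos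
  have hπ3 := Real.pi_gt_three
  have hp0 : (0:ℝ) < p := by linarith
  obtain ⟨-, hA1, hA2⟩ := Ap_props hp
  have hAnn : (0:ℝ) ≤ Ap p := le_trans (by positivity) hA1
  constructor
  · have h : (4:ℝ)⁻¹ ≤ Ap p ^ (1/p) := by
      calc (4:ℝ)⁻¹ = ((4:ℝ)⁻¹ ^ p) ^ (1/p) := (rpow_rpow_inv' (by norm_num) hp0).symm
        _ ≤ _ := Real.rpow_le_rpow (by positivity) hA1 (by positivity)
    have e : 1 / (4 * π) = (4:ℝ)⁻¹ / π := by ring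
    rw [e]
    gcongr
  · rw [div_le_one hπ]
    calc Ap p ^ (1/p) ≤ π ^ (1/p) := Real.rpow_le_rpow hAnn hA2 (by positivity)
      _ ≤ π ^ (1:ℝ) := Real.rpow_le_rpow_of_exponent_le (by linarith)
          (by rw [div_le_one hp0]; linarith)
      _ = π := Real.rpow_one _

lemma pconj_inv {p : ℝ} (hp : 1 < p) : 1 / pconj p = 1 - 1/p := by
  rw [pconj, one_div_div]
  field_simp

lemma texp {p t : ℝ} (hp : 1 < p) (ht : 0 < t) :
    t / (t + 1) ^ (1 + 1 / pconj p) = t * (t + 1) ^ (1/p - 2) := by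
  have hs : (0:ℝ) < t + 1 := by linarith
  have hexp : 1 + 1 / pconj p = 2 - 1/p := by rw [pconj_inv hp]; ring
  rw [hexp, show (1/p - 2 : ℝ) = -(2 - 1/p) from by ring, Real.rpow_neg hs.le, div_eq_mul_inv]

lemma middle {p t : ℝ} (hp : 1 < p) (ht : 0 < t) :
    1/300 * (t / (t + 1) ^ (1 + 1 / pconj p)) ≤ lpN p (pg t) ∧
    lpN p (pg t) ≤ 10 * (t / (t + 1) ^ (1 + 1 / pconj p)) := by
  have hπ := Real.pi_pos
  have hπ4 := Real.pi_lt_d2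
  have hs : (0:ℝ) < t + 1 := by linarith
  obtain ⟨hK1, hK2⟩ := Kp_bounds hp
  have hX : (0:ℝ) ≤ t * (t + 1) ^ (1/p - 2) := by
    have := Real.rpow_nonneg hs.le (1/p - 2); positivity
  rw [texp hp ht, lpN_pg hp ht]
  constructor
  · apply mul_le_mul_of_nonneg_right _ hX
    refine le_trans ?_ hK1
    rw [div_le_div_iff₀ (by norm_num) (by positivity)]
    nlinarith
  · exact mul_le_mul_of_nonneg_right (hK2.trans (by norm_num)) hX
section TInt

variable {p q : ℝ}

/-- The profile of the `t`-integral. -/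
noncomputable def Ft (p q t : ℝ) : ℝ := t ^ (q - 1) * (t + 1) ^ ((1/p - 2) * q)

lemma Ft_meas : Measurable (Ft p q) := by
  apply Measurable.mul
  · exact measurable_id.pow measurable_const
  · exact (measurable_id.add_const 1).pow measurable_const

lemma Ft_nonneg {t : ℝ} (ht0 : 0 < t) : 0 ≤ Ft p q t :=
  mul_nonneg (Real.rpow_nonneg ht0.le _) (Real.rpow_nonneg (by linarith) _)

lemma r_nonpos (hp : 1 < p) (hq : 1 < q) : (1/p - 2) * q ≤ 0 := by
  have h1 : 1/p ≤ 1 := by rw [div_le_one (by linarith)]; linarith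
  nlinarith

lemma exp_lt (hp : 1 < p) (hq : 1 < q) : q - 1 + (1/p - 2) * q < -1 := by
  have h1 : 1/p < 1 := by rw [div_lt_one (by linarith)]; linarith
  nlinarith

lemma Ft_int_Ioc (hp : 1 < p) (hq : 1 < q) : IntegrableOn (Ft p q) (Ioc 0 1) := by
  apply Integrable.mono (g := fun _ : ℝ => (1:ℝ))
    (integrableOn_const (by simp))
    (Ft_meas.aestronglyMeasurable.restrict)
  filter_upwards [ae_restrict_mem measurableSet_Ioc] with t ht
  have ht0 : 0 < t := ht.1
  rw [Real.norm_eq_abs, Real.norm_eq_abs, abs_one, abs_of_nonneg (Ft_nonneg ht0)]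
  have h1 : t ^ (q - 1) ≤ 1 := Real.rpow_le_one ht0.le ht.2 (by linarith)
  have h2 : (t + 1) ^ ((1/p - 2) * q) ≤ 1 :=
    Real.rpow_le_one_of_one_le_of_nonpos (by linarith) (r_nonpos hp hq)
  calc Ft p q t ≤ 1 * 1 :=
        mul_le_mul h1 h2 (Real.rpow_nonneg (by linarith) _) (by norm_num)
    _ = 1 := by norm_num

lemma Ft_le_rpow (hp : 1 < p) (hq : 1 < q) {t : ℝ} (ht : 1 < t) :
    Ft p q t ≤ t ^ (q - 1 + (1/p - 2) * q) := by
  have ht0 : (0:ℝ) < t := by linarith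
  rw [Real.rpow_add ht0]
  apply mul_le_mul_of_nonneg_left _ (by positivity)
  exact Real.rpow_le_rpow_of_nonpos ht0 (by linarith) (r_nonpos hp hq)

lemma Ft_int_Ioi1 (hp : 1 < p) (hq : 1 < q) : IntegrableOn (Ft p q) (Ioi 1) := by
  apply Integrable.mono (integrableOn_Ioi_rpow_of_lt (exp_lt hp hq) one_pos)
    (Ft_meas.aestronglyMeasurable.restrict)
  filter_upwards [ae_restrict_mem measurableSet_Ioi] with t ht
  have ht0 : (0:ℝ) < t := lt_trans one_pos ht
  rw [Real.norm_eq_abs, Real.norm_eq_abs, abs_of_nonneg (Ft_nonneg ht0),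
    abs_of_nonneg (Real.rpow_nonneg ht0.le _)]
  exact Ft_le_rpow hp hq ht

lemma Ft_int (hp : 1 < p) (hq : 1 < q) : IntegrableOn (Ft p q) (Ioi 0) := by
  rw [← Ioc_union_Ioi_eq_Ioi (zero_le_one : (0:ℝ) ≤ 1), integrableOn_union]
  exact ⟨Ft_int_Ioc hp hq, Ft_int_Ioi1 hp hq⟩

lemma beta_eq (hp : 1 < p) (hq : 1 < q) :
    -(q - 1 + (1/p - 2) * q) = q / pconj p + 1 ∧ 0 < q / pconj p := by
  have hp0 : (0:ℝ) < p := by linarith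
  have hppos : 0 < pconj p := by
    rw [pconj]; apply div_pos (by linarith) (by linarith)
  constructor
  · rw [pconj]
    field_simp
    ring
  · exact div_pos (by linarith) hppos

lemma int_Ioi1_rpow (hp : 1 < p) (hq : 1 < q) :
    ∫ t in Ioi (1:ℝ), t ^ (q - 1 + (1/p - 2) * q) = pconj p / q := by
  obtain ⟨hb, hbpos⟩ := beta_eq hp hq
  rw [integral_Ioi_rpow_of_lt (exp_lt hp hq) one_pos]
  have h1 : q - 1 + (1/p - 2) * q + 1 = -(q / pconj p) := by linarith
  rw [h1, Real.one_rpow]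
  rw [neg_div_neg_eq, one_div_div]

lemma Ft_integral_le (hp : 1 < p) (hq : 1 < q) :
    ∫ t in Ioi (0:ℝ), Ft p q t ≤ 2 * pconj p := by
  have hppos : 0 < pconj p := by
    rw [pconj]; apply div_pos (by linarith) (by linarith)
  have hp1 : 1 ≤ pconj p := by
    rw [pconj, le_div_iff₀ (by linarith)]; linarith
  have hsplit : ∫ t in Ioi (0:ℝ), Ft p q t =
      (∫ t in Ioc (0:ℝ) 1, Ft p q t) + ∫ t in Ioi (1:ℝ), Ft p q t := by
    rw [← Ioc_union_Ioi_eq_Ioi (zero_le_one : (0:ℝ) ≤ 1)]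
    exact setIntegral_union (Ioc_disjoint_Ioi le_rfl) measurableSet_Ioi
      (Ft_int_Ioc hp hq) (Ft_int_Ioi1 hp hq)
  rw [hsplit]
  have h1 : (∫ t in Ioc (0:ℝ) 1, Ft p q t) ≤ 1 := by
    calc (∫ t in Ioc (0:ℝ) 1, Ft p q t) ≤ ∫ _t in Ioc (0:ℝ) 1, (1:ℝ) := by
          apply setIntegral_mono_on (Ft_int_Ioc hp hq)
            (integrableOn_const (by simp)) measurableSet_Ioc
          intro t ht
          have ht0 : 0 < t := ht.1
          have h1 : t ^ (q - 1) ≤ 1 := Real.rpow_le_one ht0.le ht.2 (by linarith)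
          have h2 : (t + 1) ^ ((1/p - 2) * q) ≤ 1 :=
            Real.rpow_le_one_of_one_le_of_nonpos (by linarith) (r_nonpos hp hq)
          calc Ft p q t ≤ 1 * 1 :=
                mul_le_mul h1 h2 (Real.rpow_nonneg (by linarith) _) (by norm_num)
            _ = 1 := by norm_num
      _ = 1 := by simp
  have h2 : (∫ t in Ioi (1:ℝ), Ft p q t) ≤ pconj p / q := by
    rw [← int_Ioi1_rpow hp hq]
    apply setIntegral_mono_on (Ft_int_Ioi1 hp hq)
      (integrableOn_Ioi_rpow_of_lt (exp_lt hp hq) one_pos) measurableSet_Ioi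
    intro t ht
    exact Ft_le_rpow hp hq ht
  have h3 : pconj p / q ≤ pconj p := by
    rw [div_le_iff₀ (by linarith)]; nlinarith
  linarith

lemma Ft_integral_ge (hp : 1 < p) (hq : 1 < q) :
    (4:ℝ)⁻¹ ^ q * (pconj p / q) ≤ ∫ t in Ioi (0:ℝ), Ft p q t := by
  set r := (1/p - 2) * q with hr
  have hr2 : -2 * q ≤ r := by
    have h1 : 0 < 1/p := by positivity
    nlinarith
  have step1 : (4:ℝ)⁻¹ ^ q * (pconj p / q) ≤ ∫ t in Ioi (1:ℝ), (2:ℝ) ^ r * t ^ (q - 1 + r) := by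
    rw [MeasureTheory.integral_const_mul, int_Ioi1_rpow hp hq]
    apply mul_le_mul_of_nonneg_right _ (by
      have hppos : 0 < pconj p := by
        rw [pconj]; apply div_pos (by linarith) (by linarith)
      positivity)
    calc (4:ℝ)⁻¹ ^ q = (2:ℝ) ^ (-2 * q) := by
          rw [show ((4:ℝ)⁻¹) = (2:ℝ) ^ (-2 : ℝ) by
            rw [show (-2:ℝ) = ((-2:ℤ):ℝ) by norm_num, Real.rpow_intCast]; norm_num,
            ← Real.rpow_mul (by norm_num)]
      _ ≤ (2:ℝ) ^ r := Real.rpow_le_rpow_of_exponent_le (by norm_num) hr2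
  have step2 : (∫ t in Ioi (1:ℝ), (2:ℝ) ^ r * t ^ (q - 1 + r)) ≤ ∫ t in Ioi (1:ℝ), Ft p q t := by
    apply setIntegral_mono_on
      ((integrableOn_Ioi_rpow_of_lt (exp_lt hp hq) one_pos).const_mul _)
      (Ft_int_Ioi1 hp hq) measurableSet_Ioi
    intro t ht
    have ht1 : (1:ℝ) < t := ht
    have ht0 : (0:ℝ) < t := lt_trans one_pos ht1
    simp only [Ft]
    have key : (2:ℝ) ^ r * t ^ r ≤ (t + 1) ^ r := by
      rw [← Real.mul_rpow (by norm_num) ht0.le]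
      exact Real.rpow_le_rpow_of_nonpos (by linarith) (by linarith : t + 1 ≤ 2 * t) (r_nonpos hp hq)
    calc (2:ℝ) ^ r * t ^ (q - 1 + r) = t ^ (q - 1) * ((2:ℝ) ^ r * t ^ r) := by
          rw [Real.rpow_add ht0]; ring
      _ ≤ t ^ (q - 1) * (t + 1) ^ r := by
          apply mul_le_mul_of_nonneg_left key (by positivity)
  have step3 : (∫ t in Ioi (1:ℝ), Ft p q t) ≤ ∫ t in Ioi (0:ℝ), Ft p q t := by
    apply setIntegral_mono_set (Ft_int hp hq)
    · filter_upwards [ae_restrict_mem measurableSet_Ioi] with t ht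
      exact Ft_nonneg ht
    · exact HasSubset.Subset.eventuallyLE (Ioi_subset_Ioi zero_le_one)
  linarith

end TInt
lemma bullet3 {p q : ℝ} (hp : 1 < p) (hq : 1 < q) :
    1/300 * pconj p ^ (1/q) ≤ (∫ t in Ioi (0:ℝ), lpN p (pg t) ^ q / t) ^ (1/q) ∧
    (∫ t in Ioi (0:ℝ), lpN p (pg t) ^ q / t) ^ (1/q) ≤ 10 * pconj p ^ (1/q) := by
  have hπ := Real.pi_pos
  have hπ4 := Real.pi_lt_d2
  have hq0 : (0:ℝ) < q := by linarith
  have hppos : 0 < pconj p := by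
    rw [pconj]; exact div_pos (by linarith) (by linarith)
  have hp1 : 1 ≤ pconj p := by
    rw [pconj, le_div_iff₀ (by linarith)]; linarith
  obtain ⟨hK1, hK2⟩ := Kp_bounds hp
  set Kp := Ap p ^ (1/p) / π with hKp
  have hKnn : 0 ≤ Kp := by
    have := Real.rpow_nonneg (le_trans (by positivity) (Ap_props hp).2.1) (1/p)
    positivity
  set P := pconj p ^ (1/q) with hP
  have hPnn : 0 ≤ P := Real.rpow_nonneg hppos.le _
  have hcong : EqOn (fun t => lpN p (pg t) ^ q / t) (fun t => Kp ^ q * Ft p q t) (Ioi 0) := by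
    intro t ht
    have ht0 : (0:ℝ) < t := ht
    have hs : (0:ℝ) < t + 1 := by linarith
    simp only
    rw [lpN_pg hp ht0, Ft, ← hKp]
    rw [Real.mul_rpow hKnn (by positivity), Real.mul_rpow ht0.le (Real.rpow_nonneg hs.le _),
      ← Real.rpow_mul hs.le, Real.rpow_sub_one ht0.ne']
    field_simp
  have hint_eq : ∫ t in Ioi (0:ℝ), lpN p (pg t) ^ q / t = Kp ^ q * ∫ t in Ioi (0:ℝ), Ft p q t := by
    rw [setIntegral_congr_fun measurableSet_Ioi hcong, MeasureTheory.integral_const_mul]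
  set I := ∫ t in Ioi (0:ℝ), Ft p q t with hI
  have hIge := Ft_integral_ge hp hq
  have hIle := Ft_integral_le hp hq
  have hInn : 0 ≤ I := le_trans (by positivity) hIge
  have hmain : (∫ t in Ioi (0:ℝ), lpN p (pg t) ^ q / t) ^ (1/q) = Kp * I ^ (1/q) := by
    rw [hint_eq, Real.mul_rpow (Real.rpow_nonneg hKnn _) hInn, rpow_rpow_inv' hKnn hq0]
  rw [hmain]
  have hq3 : q ^ (1/q) ≤ 3 := by
    rw [Real.rpow_def_of_pos hq0]
    have h1 : Real.log q * (1/q) ≤ 1 := by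
      rw [mul_one_div, div_le_one hq0]
      linarith [Real.log_le_sub_one_of_pos hq0]
    calc Real.exp (Real.log q * (1/q)) ≤ Real.exp 1 := Real.exp_le_exp.2 h1
      _ ≤ 3 := by linarith [Real.exp_one_lt_d9]
  constructor
  · have hlow : 1/12 * P ≤ I ^ (1/q) := by
      calc 1/12 * P = 4⁻¹ * (P / 3) := by ring
        _ ≤ 4⁻¹ * (P / q ^ (1/q)) := by
            apply mul_le_mul_of_nonneg_left _ (by norm_num)
            exact div_le_div_of_nonneg_left hPnn (Real.rpow_pos_of_pos hq0 _) hq3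
        _ = ((4:ℝ)⁻¹ ^ q * (pconj p / q)) ^ (1/q) := by
            rw [Real.mul_rpow (by positivity) (by positivity),
              rpow_rpow_inv' (by norm_num) hq0,
              Real.div_rpow hppos.le hq0.le]
        _ ≤ I ^ (1/q) := Real.rpow_le_rpow (by positivity) hIge (by positivity)
    have h13 : (1:ℝ)/13 ≤ 1/(4*π) := by
      rw [div_le_div_iff₀ (by norm_num) (by positivity)]
      nlinarith
    calc 1/300 * P ≤ 1/13 * (1/12 * P) := by nlinarith
      _ ≤ 1/(4*π) * (1/12 * P) := mul_le_mul_of_nonneg_right h13 (by positivity)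
      _ ≤ Kp * I ^ (1/q) := mul_le_mul hK1 hlow (by positivity) hKnn
  · have hup : I ^ (1/q) ≤ 2 * P := by
      calc I ^ (1/q) ≤ (2 * pconj p) ^ (1/q) :=
            Real.rpow_le_rpow hInn hIle (by positivity)
        _ = 2 ^ (1/q) * P := Real.mul_rpow (by norm_num) hppos.le
        _ ≤ 2 * P := by
            apply mul_le_mul_of_nonneg_right _ hPnn
            calc (2:ℝ) ^ (1/q) ≤ 2 ^ (1:ℝ) :=
                  Real.rpow_le_rpow_of_exponent_le one_le_two
                    (by rw [div_le_one hq0]; linarith)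
              _ = 2 := Real.rpow_one 2
    calc Kp * I ^ (1/q) ≤ 1 * (2 * P) := mul_le_mul hK2 hup (Real.rpow_nonneg hInn _) zero_le_one
      _ ≤ 10 * P := by nlinarith

/-- for `f = 𝐏_1`, `‖f‖_p ≈ 1`, `‖t∂_t 𝐏_t * f‖_p ≈ t(t+1)^{-1-1/p'}`, and
`(∫_0^∞ ‖t∂_t 𝐏_t * f‖_p^q dt/t)^{1/q} ≈ (p')^{1/q}`, with absolute constants. -/
theorem stmt17 :
    ∃ c C : ℝ, 0 < c ∧ 0 < C ∧ ∀ p : ℝ, 1 < p →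
      (c ≤ lpN p (pK 1) ∧ lpN p (pK 1) ≤ C) ∧
      (∀ t : ℝ, 0 < t →
        c * (t / (t + 1) ^ (1 + 1 / pconj p)) ≤ lpN p (pg t) ∧
        lpN p (pg t) ≤ C * (t / (t + 1) ^ (1 + 1 / pconj p))) ∧
      (∀ q : ℝ, 1 < q →
        c * pconj p ^ (1 / q)
            ≤ (∫ t in Ioi (0 : ℝ), lpN p (pg t) ^ q / t) ^ (1 / q) ∧
        (∫ t in Ioi (0 : ℝ), lpN p (pg t) ^ q / t) ^ (1 / q)
            ≤ C * pconj p ^ (1 / q)) := by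
  refine ⟨1/300, 10, by norm_num, by norm_num, fun p hp =>
    ⟨?_, fun t ht => middle hp ht, fun q hq => bullet3 hp hq⟩⟩
  obtain ⟨h1, h2⟩ := lpN_pK1 hp
  have hπ := Real.pi_gt_three
  have hπ4 := Real.pi_lt_d2
  constructor
  · refine le_trans ?_ h1
    rw [div_le_div_iff₀ (by norm_num) (by positivity)]
    nlinarith
  · linarith
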